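/- Let k be a field and A, B unital associative k-algebras. A trace on a k-algebra R is a k-linear map R → k vanishing on all commutators ab − ba; for an idempotent matrix e over R and a trace t, write t(e) for t applied to the sum of the diagonal entries of e. Assume: (i) the space of traces on A is one-dimensional, spanned by a trace t_A with t_A(1) ≠ 0; (ii) t_B is a trace on B; (iii) M is an (A,B)-bimodule (with the two k-actions agreeing) which is finitely generated projective as a left A-module and finitely generated projective as a right B-module, say M ≅ p·B^l as right B-modules for some idempotent p ∈ M_l(B). Set c := t_B(p)·t_A(1)^{-1}. Then for every idempotent matrix q ∈ M_n(A) and every idempotent matrix r ∈ M_m(B) such that r·B^m is isomorphic to (q·A^n) ⊗_A M as right B-modules, one has t_B(r) = c·t_A(q). -/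

import Mathlib

open MulOpposite

/-- The right `B`-module `p·Bˡ`: column vectors `v ∈ Bˡ` with `p·v = v`, as a module
over `Bᵐᵒᵖ`. -/
def idemRange {B : Type*} [Ring B] {l : ℕ} (p : Matrix (Fin l) (Fin l) B) :
    Submodule Bᵐᵒᵖ (Fin l → B) where
  carrier := {v | p.mulVec v = v}
  add_mem' := by
    intro a b ha hb
    simp only [Set.mem_setOf_eq] at *
    rw [Matrix.mulVec_add, ha, hb]
  zero_mem' := by
    simp only [Set.mem_setOf_eq, Matrix.mulVec_zero]
  smul_mem' := by
    intro c v hv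
    simp only [Set.mem_setOf_eq] at *
    have h : p.mulVec (c • v) = c • p.mulVec v := by
      funext i
      simp only [Matrix.mulVec, dotProduct, Pi.smul_apply, smul_eq_mul_unop,
        Finset.sum_mul, mul_assoc]
    rw [h, hv]

/-- The right `B`-module `q·Mⁿ` (concrete model of `(q·Aⁿ) ⊗_A M`): vectors
`w ∈ Mⁿ` fixed by the action of the idempotent matrix `q ∈ Mₙ(A)`, as a module over
`Bᵐᵒᵖ` via the right `B`-action on the `(A,B)`-bimodule `M`. -/
def matSmulRange {A M : Type*} [Ring A] [AddCommGroup M] [Module A M]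
    {B : Type*} [Ring B] [Module Bᵐᵒᵖ M] [SMulCommClass A Bᵐᵒᵖ M]
    {n : ℕ} (q : Matrix (Fin n) (Fin n) A) : Submodule Bᵐᵒᵖ (Fin n → M) where
  carrier := {w | (fun i => ∑ j, q i j • w j) = w}
  add_mem' := by
    intro a b ha hb
    simp only [Set.mem_setOf_eq] at *
    funext i
    calc (∑ j, q i j • (a + b) j) = (∑ j, q i j • a j) + ∑ j, q i j • b j := by
          simp [smul_add, Finset.sum_add_distrib]
      _ = (a + b) i := by
          rw [show (∑ j, q i j • a j) = a i from congrFun ha i,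
            show (∑ j, q i j • b j) = b i from congrFun hb i]; rfl
  zero_mem' := by
    simp only [Set.mem_setOf_eq]
    funext i
    simp
  smul_mem' := by
    intro c w hw
    simp only [Set.mem_setOf_eq] at *
    funext i
    calc (∑ j, q i j • (c • w) j) = c • ∑ j, q i j • w j := by
          rw [Finset.smul_sum]
          exact Finset.sum_congr rfl fun j _ => (smul_comm (q i j) c (w j)).symm ▸ rfl
      _ = (c • w) i := by rw [show (∑ j, q i j • w j) = w i from congrFun hw i]; rfl



section Gen
variable {B : Type*} [Ring B]

/-- generalization of `idemRange` to arbitrary finite index types -/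
def gR {ι : Type*} [Fintype ι] (p : Matrix ι ι B) : Submodule Bᵐᵒᵖ (ι → B) where
  carrier := {v | p.mulVec v = v}
  add_mem' := by
    intro a b ha hb
    simp only [Set.mem_setOf_eq] at *
    rw [Matrix.mulVec_add, ha, hb]
  zero_mem' := by
    simp only [Set.mem_setOf_eq, Matrix.mulVec_zero]
  smul_mem' := by
    intro c v hv
    simp only [Set.mem_setOf_eq] at *
    have h : p.mulVec (c • v) = c • p.mulVec v := by
      funext i
      simp only [Matrix.mulVec, dotProduct, Pi.smul_apply, smul_eq_mul_unop,
        Finset.sum_mul, mul_assoc]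
    rw [h, hv]

variable {ι κ : Type*} [Fintype ι] [Fintype κ]

lemma mem_gR {p : Matrix ι ι B} {v : ι → B} : v ∈ gR p ↔ p.mulVec v = v := Iff.rfl

lemma gR_fix {p : Matrix ι ι B} (v : gR p) : p.mulVec (v : ι → B) = v := v.2

/-- the `j`-th column of an idempotent matrix, as an element of its range -/
def colP (p : Matrix ι ι B) (hp : p * p = p) (j : ι) : gR p :=
  ⟨fun i => p i j, by
    funext i
    have h : (p * p) i j = p i j := by rw [hp]
    rw [Matrix.mul_apply] at h
    simpa [Matrix.mulVec, dotProduct] using h⟩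

lemma smul_val {p : Matrix ι ι B} (b : B) (v : gR p) (i : ι) :
    (((op b) • v : gR p) : ι → B) i = (v : ι → B) i * b := rfl

lemma gR_expand {p : Matrix ι ι B} (hp : p * p = p) (v : gR p) :
    ∑ j, (op ((v : ι → B) j)) • colP p hp j = v := by
  apply Subtype.ext
  have : ((∑ j, (op ((v : ι → B) j)) • colP p hp j : gR p) : ι → B)
      = ∑ j, ((op ((v : ι → B) j) • colP p hp j : gR p) : ι → B) := by
    exact Submodule.coe_sum _ _ _
  rw [this]
  funext i
  simp only [Finset.sum_apply, smul_val]
  have := congrFun (gR_fix v) i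
  simpa [Matrix.mulVec, dotProduct, colP] using this

lemma gR_apply_expand {p : Matrix ι ι B} (hp : p * p = p) {N : Type*} [AddCommGroup N]
    [Module Bᵐᵒᵖ N] (φ : gR p →ₗ[Bᵐᵒᵖ] N) (v : gR p) :
    φ v = ∑ j, (op ((v : ι → B) j)) • φ (colP p hp j) := by
  rw [← gR_expand hp v, map_sum]
  simp only [map_smul]
  congr 1
  rw [gR_expand hp v]

end Gen
open MulOpposite

section Tr
variable {k : Type*} [Field k] {B : Type*} [Ring B] [Algebra k B]
variable {ι κ : Type*} [Fintype ι] [Fintype κ]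

lemma tB_trace_comm (tB : B →ₗ[k] k) (htB : ∀ a b : B, tB (a * b) = tB (b * a))
    (X : Matrix ι κ B) (Y : Matrix κ ι B) : tB (X * Y).trace = tB (Y * X).trace := by
  simp only [Matrix.trace, Matrix.diag, Matrix.mul_apply, map_sum]
  rw [Finset.sum_comm]
  exact Finset.sum_congr rfl fun j _ => Finset.sum_congr rfl fun i _ => htB _ _

lemma tB_trace_eq_of_iso (tB : B →ₗ[k] k) (htB : ∀ a b : B, tB (a * b) = tB (b * a))
    {e : Matrix ι ι B} {f : Matrix κ κ B} (he : e * e = e) (hf : f * f = f)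
    (φ : gR e ≃ₗ[Bᵐᵒᵖ] gR f) : tB e.trace = tB f.trace := by
  set u : Matrix κ ι B := fun i j => ((φ (colP e he j) : gR f) : κ → B) i with hu
  set v : Matrix ι κ B := fun i j => ((φ.symm (colP f hf j) : gR e) : ι → B) i with hv
  have hvu : v * u = e := by
    ext i j
    have h := gR_apply_expand hf φ.symm.toLinearMap (φ (colP e he j))
    rw [show (φ.symm.toLinearMap (φ (colP e he j))) = colP e he j from φ.symm_apply_apply _] at h
    have := congrFun (congrArg (Subtype.val) h) i
    rw [show ((∑ s, (op (((φ (colP e he j) : gR f) : κ → B) s)) •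
        φ.symm.toLinearMap (colP f hf s) : gR e) : ι → B)
        = ∑ s, (((op (((φ (colP e he j) : gR f) : κ → B) s)) •
        φ.symm.toLinearMap (colP f hf s) : gR e) : ι → B) from Submodule.coe_sum _ _ _] at this
    simp only [Finset.sum_apply, smul_val] at this
    rw [Matrix.mul_apply]
    simpa [Matrix.mul_apply, hu, hv, colP] using this.symm
  have huv : u * v = f := by
    ext i j
    have h := gR_apply_expand he φ.toLinearMap (φ.symm (colP f hf j))
    rw [show (φ.toLinearMap (φ.symm (colP f hf j))) = colP f hf j from φ.apply_symm_apply _] at h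
    have := congrFun (congrArg (Subtype.val) h) i
    rw [show ((∑ s, (op (((φ.symm (colP f hf j) : gR e) : ι → B) s)) •
        φ.toLinearMap (colP e he s) : gR f) : κ → B)
        = ∑ s, (((op ((((φ.symm (colP f hf j) : gR e) : ι → B)) s)) •
        φ.toLinearMap (colP e he s) : gR f) : κ → B) from Submodule.coe_sum _ _ _] at this
    simp only [Finset.sum_apply, smul_val] at this
    rw [Matrix.mul_apply]
    simpa [Matrix.mul_apply, hu, hv, colP] using this.symm
  rw [← hvu, ← huv, tB_trace_comm tB htB]

end Tr

section Phi
variable {B : Type*} [Ring B] {ι : Type*} [Fintype ι]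
variable {p : Matrix ι ι B}

/-- the matrix of an endomorphism of `gR p` -/
def Phi (hp : p * p = p) (f : gR p →ₗ[Bᵐᵒᵖ] gR p) : Matrix ι ι B :=
  fun i j => ((f (colP p hp j) : gR p) : ι → B) i

lemma Phi_mulVec (hp : p * p = p) (f : gR p →ₗ[Bᵐᵒᵖ] gR p) (x : gR p) :
    (Phi hp f).mulVec (x : ι → B) = ((f x : gR p) : ι → B) := by
  rw [gR_apply_expand hp f x]
  rw [show ((∑ j, (op ((x : ι → B) j)) • f (colP p hp j) : gR p) : ι → B)
      = ∑ j, (((op ((x : ι → B) j)) • f (colP p hp j) : gR p) : ι → B) from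
    Submodule.coe_sum _ _ _]
  funext i
  simp only [Finset.sum_apply, smul_val]
  simp [Matrix.mulVec, dotProduct, Phi]

lemma Phi_comp (hp : p * p = p) (f g : gR p →ₗ[Bᵐᵒᵖ] gR p) :
    Phi hp (f ∘ₗ g) = Phi hp f * Phi hp g := by
  ext i j
  rw [Matrix.mul_apply]
  have := congrFun (Phi_mulVec hp f (g (colP p hp j))) i
  simpa [Matrix.mulVec, dotProduct, Phi] using this.symm

lemma Phi_id (hp : p * p = p) : Phi hp LinearMap.id = p := rfl

lemma Phi_add (hp : p * p = p) (f g : gR p →ₗ[Bᵐᵒᵖ] gR p) :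
    Phi hp (f + g) = Phi hp f + Phi hp g := rfl

lemma Phi_zero (hp : p * p = p) : Phi hp 0 = 0 := rfl

lemma Phi_sum (hp : p * p = p) {α : Type*} (s : Finset α)
    (f : α → (gR p →ₗ[Bᵐᵒᵖ] gR p)) :
    Phi hp (∑ a ∈ s, f a) = ∑ a ∈ s, Phi hp (f a) := by
  classical
  induction s using Finset.induction with
  | empty => simp [Phi_zero]
  | insert _ _ h ih => rw [Finset.sum_insert h, Finset.sum_insert h, Phi_add, ih]

lemma p_mul_Phi (hp : p * p = p) (f : gR p →ₗ[Bᵐᵒᵖ] gR p) :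
    p * Phi hp f = Phi hp f := by
  ext i j
  have := congrFun (gR_fix (f (colP p hp j))) i
  simpa [Matrix.mul_apply, Matrix.mulVec, dotProduct, Phi] using this

lemma Phi_mulVec_mem (hp : p * p = p) (f : gR p →ₗ[Bᵐᵒᵖ] gR p) (x : ι → B) :
    (Phi hp f).mulVec x ∈ gR p := by
  show p.mulVec _ = _
  rw [Matrix.mulVec_mulVec, p_mul_Phi]

end Phi

/-- Lemma 1.4.2: if `A` has a one-dimensional space of traces
spanned by `t_A` with `t_A 1 ≠ 0`, `t_B` is a trace on `B`, and `M` is an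
`(A,B)`-bimodule, finitely generated projective both as a left `A`-module and a
right `B`-module, with `M ≅ p·Bˡ` for an idempotent `p`, then with
`c := t_B(p)·t_A(1)⁻¹`, for any idempotents `q ∈ Mₙ(A)`, `r ∈ Mₘ(B)` with
`r·Bᵐ ≅ (q·Aⁿ) ⊗_A M` as right `B`-modules one has `t_B(r) = c·t_A(q)`. -/
theorem stmt_9 {k : Type*} [Field k] {A B M : Type*}
    [Ring A] [Algebra k A] [Ring B] [Algebra k B]
    [AddCommGroup M] [Module k M] [Module A M] [Module Bᵐᵒᵖ M]
    [SMulCommClass A Bᵐᵒᵖ M] [IsScalarTower k A M] [IsScalarTower k Bᵐᵒᵖ M]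
    (tA : A →ₗ[k] k) (htA : ∀ a b : A, tA (a * b) = tA (b * a)) (htA1 : tA 1 ≠ 0)
    (huniq : ∀ t : A →ₗ[k] k, (∀ a b : A, t (a * b) = t (b * a)) → ∃ c : k, t = c • tA)
    (tB : B →ₗ[k] k) (htB : ∀ a b : B, tB (a * b) = tB (b * a))
    [Module.Finite A M] [Module.Projective A M]
    [Module.Finite Bᵐᵒᵖ M] [Module.Projective Bᵐᵒᵖ M]
    (l : ℕ) (p : Matrix (Fin l) (Fin l) B) (hp : p * p = p)
    (hMp : Nonempty (M ≃ₗ[Bᵐᵒᵖ] idemRange p)) :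
    ∀ (n m : ℕ) (q : Matrix (Fin n) (Fin n) A) (r : Matrix (Fin m) (Fin m) B),
      q * q = q → r * r = r →
      Nonempty (idemRange r ≃ₗ[Bᵐᵒᵖ] matSmulRange (B := B) (M := M) q) →
      tB r.trace = tB p.trace * (tA 1)⁻¹ * tA q.trace := by
  intro n m q r hq hr hiso
  obtain ⟨e0⟩ := hMp
  obtain ⟨ψ0⟩ := hiso
  have hIR : idemRange p = gR p := rfl
  have hIRr : idemRange r = gR r := rfl
  let e' : M ≃ₗ[Bᵐᵒᵖ] gR p := e0.trans (LinearEquiv.ofEq _ _ hIR)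
  -- left multiplication by `a : A` as a right-`B`-linear endomorphism of `M`
  let lmul : A → (M →ₗ[Bᵐᵒᵖ] M) := fun a =>
    { toFun := fun x => a • x
      map_add' := fun x y => smul_add a x y
      map_smul' := fun c x => smul_comm a c x }
  let F : A → (gR p →ₗ[Bᵐᵒᵖ] gR p) := fun a =>
    e'.toLinearMap ∘ₗ lmul a ∘ₗ e'.symm.toLinearMap
  have hF_apply : ∀ (a : A) (x : gR p), F a x = e' (a • e'.symm x) := fun _ _ => rfl
  have hF_comp : ∀ a b : A, F (a * b) = F a ∘ₗ F b := by
    intro a b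
    apply LinearMap.ext; intro x
    show e' ((a * b) • e'.symm x) = e' (a • e'.symm (e' (b • e'.symm x)))
    rw [e'.symm_apply_apply, mul_smul]
  have hF_one : F 1 = LinearMap.id := by
    apply LinearMap.ext; intro x
    show e' ((1 : A) • e'.symm x) = x
    rw [one_smul, e'.apply_symm_apply]
  have hF_add : ∀ a b : A, F (a + b) = F a + F b := by
    intro a b
    apply LinearMap.ext; intro x
    show e' ((a + b) • e'.symm x) = e' (a • e'.symm x) + e' (b • e'.symm x)
    rw [add_smul, map_add]
  have hF_zero : F 0 = 0 := by
    apply LinearMap.ext; intro x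
    show e' ((0 : A) • e'.symm x) = 0
    rw [zero_smul, map_zero]
  have hF_sum : ∀ {α : Type} (s : Finset α) (g : α → A),
      F (∑ a ∈ s, g a) = ∑ a ∈ s, F (g a) := by
    intro α s g
    classical
    induction s using Finset.induction with
    | empty => simpa using hF_zero
    | insert _ _ h ih => rw [Finset.sum_insert h, Finset.sum_insert h, hF_add, ih]
  have hF_ksmul : ∀ (c : k) (a : A),
      Phi hp (F (c • a)) = fun i j => Phi hp (F a) i j * algebraMap k B c := by
    intro c a
    funext i j
    show ((F (c • a) (colP p hp j) : gR p) : Fin l → B) i = _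
    have h1 : F (c • a) (colP p hp j)
        = (op (algebraMap k B c)) • F a (colP p hp j) := by
      rw [hF_apply, hF_apply, smul_assoc, ← algebraMap_smul Bᵐᵒᵖ c,
        map_smul, MulOpposite.algebraMap_apply]
    rw [h1, smul_val]; rfl
  -- the induced trace on A
  let tau : A →ₗ[k] k :=
    { toFun := fun a => tB ((Phi hp (F a)).trace)
      map_add' := by
        intro a b
        rw [hF_add, Phi_add, Matrix.trace_add, map_add]
      map_smul' := by
        intro c a
        rw [hF_ksmul]
        have htr : Matrix.trace (fun i j => Phi hp (F a) i j * algebraMap k B c)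
            = (Phi hp (F a)).trace * algebraMap k B c := by
          simp [Matrix.trace, Matrix.diag, Finset.sum_mul]
        rw [htr, ← Algebra.commutes, ← Algebra.smul_def, map_smul]
        simp }
  have tau_apply : ∀ a : A, tau a = tB ((Phi hp (F a)).trace) := fun _ => rfl
  have tau_tr : ∀ a b : A, tau (a * b) = tau (b * a) := by
    intro a b
    rw [tau_apply, tau_apply, hF_comp, hF_comp, Phi_comp, Phi_comp,
      tB_trace_comm tB htB]
  obtain ⟨c, hc⟩ := huniq tau tau_tr
  have h1 : tau 1 = tB p.trace := by rw [tau_apply, hF_one, Phi_id]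
  have hc1 : tB p.trace = c * tA 1 := by
    rw [← h1, hc]; simp [smul_eq_mul]
  have hcval : c = tB p.trace * (tA 1)⁻¹ := by
    field_simp [hc1]
    exact hc1.symm
  -- the big idempotent matrix over B representing (q·Aⁿ) ⊗ M
  let Q : Matrix (Fin n × Fin l) (Fin n × Fin l) B :=
    fun x y => Phi hp (F (q x.1 y.1)) x.2 y.2
  have hQ : Q * Q = Q := by
    ext ⟨i, s⟩ ⟨j, t⟩
    rw [Matrix.mul_apply, Fintype.sum_prod_type]
    have hinner : ∀ u, ∑ v, Q (i, s) (u, v) * Q (u, v) (j, t)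
        = Phi hp (F (q i u * q u j)) s t := by
      intro u
      rw [hF_comp, Phi_comp, Matrix.mul_apply]
    rw [Finset.sum_congr rfl fun u _ => hinner u]
    have : ∑ u, Phi hp (F (q i u * q u j)) s t
        = Phi hp (∑ u, F (q i u * q u j)) s t := by
      rw [Phi_sum, Matrix.sum_apply]
    rw [this, ← hF_sum]
    have hqq : ∑ u, q i u * q u j = q i j := by
      have h := congrFun (congrFun hq i) j
      rw [← h]
      simp [Matrix.mul_apply]
    rw [hqq]
  have hQtr : tB Q.trace = tau q.trace := by
    have h2 : Q.trace = ∑ i, (Phi hp (F (q i i))).trace := by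
      simp only [Matrix.trace, Matrix.diag, Fintype.sum_prod_type, Q]
    rw [h2, tau_apply]
    have h3 : Matrix.trace q = ∑ i, q i i := rfl
    rw [h3, hF_sum, Phi_sum, Matrix.trace_sum]
  -- key computation: Phi of F a acts on vectors in gR p as e' ∘ (a • ·) ∘ e'.symm
  have keyA : ∀ (a : A) (x : gR p),
      (Phi hp (F a)).mulVec (x : Fin l → B) = ((e' (a • e'.symm x) : gR p) : Fin l → B) := by
    intro a x
    rw [Phi_mulVec hp (F a) x, hF_apply]
  -- slice decomposition for vectors fixed by Q
  have hexp : ∀ (v : gR Q) (i : Fin n),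
      (fun s => (v : Fin n × Fin l → B) (i, s))
        = ∑ j, (Phi hp (F (q i j))).mulVec (fun t => (v : Fin n × Fin l → B) (j, t)) := by
    intro v i
    funext s
    rw [Finset.sum_apply, ← congrFun (gR_fix v) (i, s)]
    simp only [Matrix.mulVec, dotProduct]
    rw [Fintype.sum_prod_type]
  have slice_mem : ∀ (v : gR Q) (i : Fin n),
      (fun s => (v : Fin n × Fin l → B) (i, s)) ∈ gR p := by
    intro v i
    rw [hexp v i]
    exact Submodule.sum_mem _ fun j _ => Phi_mulVec_mem hp _ _
  -- the forward map lands in gR Q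
  have fwd_mem : ∀ (w : matSmulRange (B := B) (M := M) q),
      (fun x : Fin n × Fin l =>
        ((e' ((w : Fin n → M) x.1) : gR p) : Fin l → B) x.2) ∈ gR Q := by
    intro w
    show Q.mulVec _ = _
    funext x
    obtain ⟨i, s⟩ := x
    have hw : ∑ j, q i j • (w : Fin n → M) j = (w : Fin n → M) i := congrFun w.2 i
    have hinner : ∀ j, ∑ t, Q (i, s) (j, t)
          * ((e' ((w : Fin n → M) j) : gR p) : Fin l → B) t
        = ((e' (q i j • (w : Fin n → M) j) : gR p) : Fin l → B) s := by
      intro j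
      have h := congrFun (keyA (q i j) (e' ((w : Fin n → M) j))) s
      rw [e'.symm_apply_apply] at h
      simpa [Matrix.mulVec, dotProduct, Q] using h
    simp only [Matrix.mulVec, dotProduct]
    rw [Fintype.sum_prod_type]
    rw [Finset.sum_congr rfl fun j _ => hinner j]
    rw [← Finset.sum_apply, ← Submodule.coe_sum, ← map_sum, hw]
  -- the backward map lands in matSmulRange q
  have inv_mem : ∀ (v : gR Q),
      (fun i => e'.symm (⟨fun s => (v : Fin n × Fin l → B) (i, s), slice_mem v i⟩ : gR p))
        ∈ matSmulRange (B := B) (M := M) q := by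
    intro v
    show (fun i => ∑ j, q i j • _) = _
    funext i
    have key : e' (∑ j, q i j •
          e'.symm (⟨fun s => (v : Fin n × Fin l → B) (j, s), slice_mem v j⟩ : gR p))
        = (⟨fun s => (v : Fin n × Fin l → B) (i, s), slice_mem v i⟩ : gR p) := by
      apply Subtype.ext
      rw [map_sum, Submodule.coe_sum]
      funext s
      rw [Finset.sum_apply]
      have hterm : ∀ j, ((e' (q i j •
            e'.symm (⟨fun t => (v : Fin n × Fin l → B) (j, t), slice_mem v j⟩ : gR p))
              : gR p) : Fin l → B) s
          = ((Phi hp (F (q i j))).mulVec (fun t => (v : Fin n × Fin l → B) (j, t))) s := by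
        intro j
        exact (congrFun (keyA (q i j) ⟨fun t => (v : Fin n × Fin l → B) (j, t),
          slice_mem v j⟩) s).symm
      rw [Finset.sum_congr rfl fun j _ => hterm j, ← Finset.sum_apply, ← hexp v i]
    rw [← key, e'.symm_apply_apply]
  -- the isomorphism matSmulRange q ≃ gR Q
  let Ψ : (matSmulRange (B := B) (M := M) q) ≃ₗ[Bᵐᵒᵖ] gR Q :=
    { toFun := fun w => ⟨fun x =>
        ((e' ((w : Fin n → M) x.1) : gR p) : Fin l → B) x.2, fwd_mem w⟩
      map_add' := by
        intro w w'
        apply Subtype.ext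
        funext x
        simp
      map_smul' := by
        intro b w
        apply Subtype.ext
        funext x
        simp [smul_eq_mul_unop]
      invFun := fun v => ⟨fun i =>
        e'.symm (⟨fun s => (v : Fin n × Fin l → B) (i, s), slice_mem v i⟩ : gR p),
        inv_mem v⟩
      left_inv := by
        intro w
        apply Subtype.ext
        funext i
        dsimp only
        rw [LinearEquiv.symm_apply_eq]
      right_inv := by
        intro v
        apply Subtype.ext
        funext x
        dsimp only
        rw [e'.apply_symm_apply] }
  let Φiso : gR r ≃ₗ[Bᵐᵒᵖ] gR Q :=
    ((LinearEquiv.ofEq _ _ hIRr.symm).trans ψ0).trans Ψ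
  have hfinal := tB_trace_eq_of_iso tB htB hr hQ Φiso
  rw [hfinal, hQtr, hc, LinearMap.smul_apply, smul_eq_mul, hcval]
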